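/- Let L > 0 and T > 0, and let φ be a classical solution on [0,L]×[0,T] of the adjoint linear KdV system φ_t + φ_x + φ_{xxx} = 0 with boundary conditions φ(L,t) = 0, φ_x(L,t) = 0 and φ(0,t) + φ_{xx}(0,t) = 0 for all t ∈ [0,T]. Then the energy identity ∫₀^L φ(x,T)² dx + ∫₀^T ( φ(0,t)² + φ_x(0,t)² ) dt = ∫₀^L φ(x,0)² dx holds. -/

import Mathlib

open MeasureTheory Set

/-- **Energy identity for the adjoint linear KdV system.**
If `φ` is a classical solution of `φ_t + φ_x + φ_{xxx} = 0` on `[0,L] × [0,T]`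
with boundary conditions `φ(L,t) = 0`, `φ_x(L,t) = 0`, `φ(0,t) + φ_{xx}(0,t) = 0`, then
`∫₀^L φ(x,T)² dx + ∫₀^T (φ(0,t)² + φ_x(0,t)²) dt = ∫₀^L φ(x,0)² dx`. -/
theorem adjoint_kdv_energy_identity
    (L T : ℝ) (hL : 0 < L) (hT : 0 < T)
    (φ φt φx φxx φxxx : ℝ → ℝ → ℝ)
    (hφt : ∀ x ∈ Icc (0:ℝ) L, ∀ t ∈ Icc (0:ℝ) T,
      HasDerivAt (fun s => φ x s) (φt x t) t)
    (hφx : ∀ x ∈ Icc (0:ℝ) L, ∀ t ∈ Icc (0:ℝ) T,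
      HasDerivAt (fun y => φ y t) (φx x t) x)
    (hφxx : ∀ x ∈ Icc (0:ℝ) L, ∀ t ∈ Icc (0:ℝ) T,
      HasDerivAt (fun y => φx y t) (φxx x t) x)
    (hφxxx : ∀ x ∈ Icc (0:ℝ) L, ∀ t ∈ Icc (0:ℝ) T,
      HasDerivAt (fun y => φxx y t) (φxxx x t) x)
    (hcont : ContinuousOn (fun p : ℝ × ℝ => φ p.1 p.2) (Icc 0 L ×ˢ Icc 0 T))
    (hcontt : ContinuousOn (fun p : ℝ × ℝ => φt p.1 p.2) (Icc 0 L ×ˢ Icc 0 T))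
    (hcontx : ContinuousOn (fun p : ℝ × ℝ => φx p.1 p.2) (Icc 0 L ×ˢ Icc 0 T))
    (hcontxx : ContinuousOn (fun p : ℝ × ℝ => φxx p.1 p.2) (Icc 0 L ×ˢ Icc 0 T))
    (hcontxxx : ContinuousOn (fun p : ℝ × ℝ => φxxx p.1 p.2) (Icc 0 L ×ˢ Icc 0 T))
    (hpde : ∀ x ∈ Icc (0:ℝ) L, ∀ t ∈ Icc (0:ℝ) T,
      φt x t + φx x t + φxxx x t = 0)
    (hbc1 : ∀ t ∈ Icc (0:ℝ) T, φ L t = 0)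
    (hbc2 : ∀ t ∈ Icc (0:ℝ) T, φx L t = 0)
    (hbc3 : ∀ t ∈ Icc (0:ℝ) T, φ 0 t + φxx 0 t = 0) :
    (∫ x in (0:ℝ)..L, (φ x T) ^ 2)
      + (∫ t in (0:ℝ)..T, ((φ 0 t) ^ 2 + (φx 0 t) ^ 2))
      = ∫ x in (0:ℝ)..L, (φ x 0) ^ 2 := by
  have hLmem : L ∈ Icc (0:ℝ) L := ⟨hL.le, le_rfl⟩
  have h0Lmem : (0:ℝ) ∈ Icc (0:ℝ) L := ⟨le_rfl, hL.le⟩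
  have hTmem : T ∈ Icc (0:ℝ) T := ⟨hT.le, le_rfl⟩
  have h0Tmem : (0:ℝ) ∈ Icc (0:ℝ) T := ⟨le_rfl, hT.le⟩
  -- the "flux" integrand
  set F : ℝ → ℝ → ℝ := fun x t => 2 * φ x t * φt x t with hF
  have hFcont : ContinuousOn (fun p : ℝ × ℝ => F p.1 p.2) (Icc 0 L ×ˢ Icc 0 T) :=
    (continuousOn_const.mul hcont).mul hcontt
  -- Step A : FTC in t
  have stepA : ∀ x ∈ Icc (0:ℝ) L,
      (∫ t in (0:ℝ)..T, F x t) = φ x T ^ 2 - φ x 0 ^ 2 := by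
    intro x hx
    have hderiv : ∀ t ∈ uIcc (0:ℝ) T,
        HasDerivAt (fun s => φ x s ^ 2) (F x t) t := by
      intro t ht
      rw [uIcc_of_le hT.le] at ht
      have hd := (hφt x hx t ht).pow 2
      have : F x t = (2:ℕ) * φ x t ^ (2-1) * φt x t := by simp [hF]
      rw [this]; exact hd
    have hFi : IntervalIntegrable (fun t => F x t) volume 0 T := by
      apply ContinuousOn.intervalIntegrable
      rw [uIcc_of_le hT.le]
      exact hFcont.comp ((continuous_const.prodMk continuous_id).continuousOn)
        (fun t ht => ⟨hx, ht⟩)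
    exact intervalIntegral.integral_eq_sub_of_hasDerivAt hderiv hFi
  -- Step B : FTC in x using the PDE and boundary conditions
  have stepB : ∀ t ∈ Icc (0:ℝ) T,
      (∫ x in (0:ℝ)..L, F x t) = -(φ 0 t ^ 2 + φx 0 t ^ 2) := by
    intro t ht
    set G : ℝ → ℝ := fun x => φ x t ^ 2 + 2 * φ x t * φxx x t - φx x t ^ 2 with hG
    have hderiv : ∀ x ∈ uIcc (0:ℝ) L, HasDerivAt G (-(F x t)) x := by
      intro x hx
      rw [uIcc_of_le hL.le] at hx
      have h1 := (hφx x hx t ht).pow 2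
      have h2 := ((hφx x hx t ht).const_mul 2).mul (hφxxx x hx t ht)
      have h3 := (hφxx x hx t ht).pow 2
      have hd := (h1.add h2).sub h3
      refine hd.congr_deriv (Eq.symm ?_)
      have hp := hpde x hx t ht
      simp only [hF, pow_one, Nat.cast_ofNat]
      linear_combination (-2 * φ x t) * hp
    have hFi : IntervalIntegrable (fun x => -(F x t)) volume 0 L := by
      apply ContinuousOn.intervalIntegrable
      rw [uIcc_of_le hL.le]
      exact (hFcont.comp ((continuous_id.prodMk continuous_const).continuousOn)
        (fun x hx => ⟨hx, ht⟩)).neg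
    have key := intervalIntegral.integral_eq_sub_of_hasDerivAt hderiv hFi
    rw [intervalIntegral.integral_neg] at key
    have hGL : G L = 0 := by simp [hG, hbc1 t ht, hbc2 t ht]
    have hG0 : G 0 = -(φ 0 t ^ 2 + φx 0 t ^ 2) := by
      have := hbc3 t ht
      simp only [hG]
      linear_combination (2 * φ 0 t) * this
    have : ∫ x in (0:ℝ)..L, F x t = G 0 - G L := by linarith [key]
    rw [this, hGL, hG0]; ring
  -- Fubini
  have hIcc : IntegrableOn (fun p : ℝ × ℝ => F p.1 p.2) (Icc 0 L ×ˢ Icc 0 T) volume :=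
    hFcont.integrableOn_compact (isCompact_Icc.prod isCompact_Icc)
  have hIoc : IntegrableOn (fun p : ℝ × ℝ => F p.1 p.2) (Ioc 0 L ×ˢ Ioc 0 T) volume :=
    hIcc.mono_set (Set.prod_mono Ioc_subset_Icc_self Ioc_subset_Icc_self)
  have hswap : (∫ x in (0:ℝ)..L, ∫ t in (0:ℝ)..T, F x t)
      = ∫ t in (0:ℝ)..T, ∫ x in (0:ℝ)..L, F x t := by
    rw [intervalIntegral.integral_of_le hL.le, intervalIntegral.integral_of_le hT.le]
    simp_rw [intervalIntegral.integral_of_le hT.le, intervalIntegral.integral_of_le hL.le]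
    apply MeasureTheory.integral_integral_swap
    rw [Measure.prod_restrict]
    exact hIoc
  -- interval integrability of the slice functions
  have hiT : IntervalIntegrable (fun x => φ x T ^ 2) volume 0 L := by
    apply ContinuousOn.intervalIntegrable
    rw [uIcc_of_le hL.le]
    exact ((hcont.comp ((continuous_id.prodMk continuous_const).continuousOn)
      (fun x hx => ⟨hx, hTmem⟩)).pow 2)
  have hi0 : IntervalIntegrable (fun x => φ x 0 ^ 2) volume 0 L := by
    apply ContinuousOn.intervalIntegrable
    rw [uIcc_of_le hL.le]
    exact ((hcont.comp ((continuous_id.prodMk continuous_const).continuousOn)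
      (fun x hx => ⟨hx, h0Tmem⟩)).pow 2)
  have hA : (∫ x in (0:ℝ)..L, ∫ t in (0:ℝ)..T, F x t)
      = (∫ x in (0:ℝ)..L, φ x T ^ 2) - ∫ x in (0:ℝ)..L, φ x 0 ^ 2 := by
    rw [← intervalIntegral.integral_sub hiT hi0]
    apply intervalIntegral.integral_congr
    intro x hx
    rw [uIcc_of_le hL.le] at hx
    exact stepA x hx
  have hB : (∫ t in (0:ℝ)..T, ∫ x in (0:ℝ)..L, F x t)
      = -∫ t in (0:ℝ)..T, (φ 0 t ^ 2 + φx 0 t ^ 2) := by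
    rw [← intervalIntegral.integral_neg]
    apply intervalIntegral.integral_congr
    intro t ht
    rw [uIcc_of_le hT.le] at ht
    simpa using stepB t ht
  have := hA.symm.trans (hswap.trans hB)
  linarith [this]
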